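/- Let (a_k)_{k ≥ 0} be real numbers with a_k ≥ 0 for all k, ∑_k a_k = 1 and a_0 > 0. Let J be the matrix on ℕ defined by J i j = a_{j−i+1} if j + 1 ≥ i and J i j = 0 otherwise (so its rows, including row 0, are shifted copies of (a_1, a_2, …) with a_0 on the subdiagonal), and set α_N = det(Id − J_{[0,N]}) for N ≥ 0, with α_{−1} = 1. Let m = ∑_k k·a_k ∈ [0,∞]. Then a_0 · α_{N−1} / α_N → 1 as N → ∞ if and only if m ≤ 1. (This is the recurrence criterion for the repair-shop chain X_{n+1} = (X_n − 1)_+ + Z_{n+1} with i.i.d. steps Z of law (a_k): the chain is recurrent iff m ≤ 1.) -/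

import Mathlib

open scoped ENNReal

/-- `detOneSub M n = det(Id − M_{[0,n−1]})`, with `detOneSub M 0 = 1`
(convention `α_{−1} = 1`). -/
noncomputable def detOneSub (M : ℕ → ℕ → ℝ) (n : ℕ) : ℝ :=
  Matrix.det (1 - Matrix.of fun i j : Fin n => M i.1 j.1)

/-- The matrix `J` associated with the step distribution `a`:
`J i j = a_{j−i+1}` if `j + 1 ≥ i` and `0` otherwise. -/
noncomputable def Jmat (a : ℕ → ℝ) : ℕ → ℕ → ℝ :=
  fun i j => if i ≤ j + 1 then a (j + 1 - i) else 0

open Finset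

namespace RS

variable (a : ℕ → ℝ)

/-- tail sums -/
noncomputable def r (j : ℕ) : ℝ := 1 - ∑ k ∈ Finset.range (j+1), a k

noncomputable def U : PowerSeries ℝ := (1 - PowerSeries.mk (r a))⁻¹

noncomputable def u (n : ℕ) : ℝ := PowerSeries.coeff n (U a)

noncomputable def S (n : ℕ) : ℝ := ∑ k ∈ Finset.range (n+1), u a k

noncomputable def g (n : ℕ) : ℝ := a 0 * S a n

variable {a}

lemma r_zero : r a 0 = 1 - a 0 := by simp [r]

lemma r_nonneg (hnn : ∀ k, 0 ≤ a k) (hsum : HasSum a 1) (j : ℕ) : 0 ≤ r a j := by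
  have := sum_le_hasSum (Finset.range (j+1)) (fun k _ => hnn k) hsum
  simp only [r]; linarith

lemma r_sub (j : ℕ) : r a j - r a (j+1) = a (j+1) := by
  simp [r, Finset.sum_range_succ]

lemma constCoeff (ha0 : a 0 ≠ 0) :
    PowerSeries.constantCoeff (1 - PowerSeries.mk (r a)) = a 0 := by
  simp [r]

lemma E1 (ha0 : a 0 ≠ 0) (n : ℕ) :
    u a n - ∑ i ∈ Finset.range (n+1), r a i * u a (n - i)
      = if n = 0 then 1 else 0 := by
  have h : (1 - PowerSeries.mk (r a)) * U a = 1 := by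
    apply PowerSeries.mul_inv_cancel
    rw [constCoeff ha0]; exact ha0
  have h2 := congrArg (PowerSeries.coeff n) h
  rw [PowerSeries.coeff_mul] at h2
  rw [Finset.Nat.sum_antidiagonal_eq_sum_range_succ_mk] at h2
  simp only [map_sub, PowerSeries.coeff_one, PowerSeries.coeff_mk, sub_mul] at h2
  rw [Finset.sum_sub_distrib] at h2
  have h3 : ∑ i ∈ Finset.range (n+1), (if i = 0 then (1:ℝ) else 0) * PowerSeries.coeff (n - i) (U a)
      = PowerSeries.coeff n (U a) := by
    rw [Finset.sum_eq_single 0] <;> simp +contextual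
  rw [h3] at h2
  simp only [u]
  exact h2

lemma E2 (ha0 : a 0 ≠ 0) (n : ℕ) :
    a 0 * u a n = (if n = 0 then 1 else 0)
      + ∑ i ∈ Finset.range n, r a (i+1) * u a (n - 1 - i) := by
  have h := E1 ha0 n
  rw [Finset.sum_range_succ'] at h
  simp only [Nat.sub_zero, r_zero] at h
  have he : ∀ i ∈ Finset.range n, r a (i+1) * u a (n - (i+1)) = r a (i+1) * u a (n-1-i) := by
    intro i _
    congr 2
    omega
  rw [Finset.sum_congr rfl he] at h
  linarith [h]

lemma u_nonneg (hnn : ∀ k, 0 ≤ a k) (hsum : HasSum a 1) (ha0 : 0 < a 0) (n : ℕ) :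
    0 ≤ u a n := by
  induction n using Nat.strong_induction_on with
  | _ n ih =>
    have h := E2 ha0.ne' n
    have hs : 0 ≤ (if n = 0 then (1:ℝ) else 0)
        + ∑ i ∈ Finset.range n, r a (i+1) * u a (n - 1 - i) := by
      apply add_nonneg
      · positivity
      · apply Finset.sum_nonneg
        intro i hi
        have hi' : i < n := Finset.mem_range.mp hi
        exact mul_nonneg (r_nonneg hnn hsum _) (ih _ (by omega))
    nlinarith [h]

lemma u_zero (ha0 : a 0 ≠ 0) : u a 0 = (a 0)⁻¹ := by
  have h := E2 ha0 0
  simp at h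
  field_simp
  linarith

lemma S_succ (n : ℕ) : S a (n+1) = S a n + u a (n+1) := by
  simp [S, Finset.sum_range_succ]

lemma S_pos (hnn : ∀ k, 0 ≤ a k) (hsum : HasSum a 1) (ha0 : 0 < a 0) (n : ℕ) :
    0 < S a n := by
  have h0 : (0:ℝ) < u a 0 := by rw [u_zero ha0.ne']; positivity
  have : u a 0 ≤ S a n := by
    apply Finset.single_le_sum (f := fun k => u a k) (fun k _ => u_nonneg hnn hsum ha0 k)
    simp
  linarith

lemma S_mono (hnn : ∀ k, 0 ≤ a k) (hsum : HasSum a 1) (ha0 : 0 < a 0) :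
    Monotone (S a) := by
  apply monotone_nat_of_le_succ
  intro n
  rw [S_succ]
  linarith [u_nonneg hnn hsum ha0 (n+1)]

lemma u_le_S (hnn : ∀ k, 0 ≤ a k) (hsum : HasSum a 1) (ha0 : 0 < a 0) (n : ℕ) :
    u a n ≤ S a n := by
  apply Finset.single_le_sum (f := fun k => u a k) (fun k _ => u_nonneg hnn hsum ha0 k)
  simp

/-- triangle sum swap -/
lemma tri_comm (M : ℕ) (f : ℕ → ℕ → ℝ) :
    ∑ k ∈ Finset.range (M+1), ∑ m ∈ Finset.range (M+1-k), f k m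
      = ∑ m ∈ Finset.range (M+1), ∑ k ∈ Finset.range (M+1-m), f k m := by
  rw [Finset.sum_sigma', Finset.sum_sigma']
  refine Finset.sum_nbij' (fun x => ⟨x.2, x.1⟩) (fun x => ⟨x.2, x.1⟩) ?_ ?_
    (fun _ _ => rfl) (fun _ _ => rfl) (fun _ _ => rfl) <;>
  · simp only [Finset.mem_sigma, Finset.mem_range, Sigma.forall]
    intro b c h
    omega

/-- Key identity: `∑_{k ≤ n+1} a_k S_{n+1-k} = S_n`. -/
lemma keyS (hsum : HasSum a 1) (ha0 : a 0 ≠ 0) (n : ℕ) :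
    ∑ k ∈ Finset.range (n+2), a k * S a (n+1-k) = S a n := by
  set M := n + 1 with hM
  have e1 : ∑ k ∈ Finset.range (M+1), a k * S a (M-k)
      = ∑ k ∈ Finset.range (M+1), ∑ m ∈ Finset.range (M+1-k), a k * u a m := by
    apply Finset.sum_congr rfl
    intro k hk
    have : M - k + 1 = M + 1 - k := by
      have := Finset.mem_range.mp hk; omega
    rw [S, this, Finset.mul_sum]
  rw [e1, tri_comm]
  have e2 : ∀ m ∈ Finset.range (M+1),
      ∑ k ∈ Finset.range (M+1-m), a k * u a m = (1 - r a (M-m)) * u a m := by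
    intro m hm
    have hmM : m ≤ M := by have := Finset.mem_range.mp hm; omega
    rw [← Finset.sum_mul]
    congr 1
    have : M + 1 - m = (M - m) + 1 := by omega
    rw [this, r]
    ring
  rw [Finset.sum_congr rfl e2]
  simp only [sub_mul, one_mul, Finset.sum_sub_distrib]
  have e3 : ∑ m ∈ Finset.range (M+1), r a (M-m) * u a m
      = ∑ i ∈ Finset.range (M+1), r a i * u a (M-i) := by
    rw [← Finset.sum_range_reflect]
    apply Finset.sum_congr rfl
    intro j hj
    have := Finset.mem_range.mp hj
    congr 2 <;> omega
  rw [e3]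
  have e4 := E1 ha0 M
  have hM0 : M ≠ 0 := by omega
  rw [if_neg hM0] at e4
  have e5 : S a M = S a n + u a M := by rw [hM]; exact S_succ n
  have e6 : ∑ x ∈ Finset.range (M+1), u a x = S a M := rfl
  rw [e6, e5]
  linarith

/-- Key identity for `g`. -/
lemma keyg (hsum : HasSum a 1) (ha0 : a 0 ≠ 0) (n : ℕ) :
    ∑ k ∈ Finset.range (n+2), a k * g a (n+1-k) = g a n := by
  simp only [g]
  rw [show ∀ s : Finset ℕ, ∀ f : ℕ → ℝ, ∑ k ∈ s, f k * (a 0 * S a (n+1-k)) = a 0 * ∑ k ∈ s, f k * S a (n+1-k) from ?_]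
  · rw [keyS hsum ha0]
  · intro s f
    rw [Finset.mul_sum]
    apply Finset.sum_congr rfl
    intro k _
    ring

lemma g_zero (ha0 : a 0 ≠ 0) : g a 0 = 1 := by
  simp [g, S, u_zero ha0]
  field_simp
lemma Jrow (hsum : HasSum a 1) (ha0 : a 0 ≠ 0) (N i : ℕ) (hi : i ≤ N) :
    ∑ k ∈ Finset.range (N+1), Jmat a i k * g a (N-k)
      = g a (N-i) - (if i = 0 then a 0 * g a (N+1) else 0) := by
  cases i with
  | zero =>
    have h0 : ∀ k, Jmat a 0 k = a (k+1) := by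
      intro k; simp [Jmat]
    have hk := keyg hsum ha0 N
    rw [Finset.sum_range_succ'] at hk
    simp only [Nat.succ_sub_succ, Nat.sub_zero] at hk
    simp only [h0, Nat.sub_zero, ite_true, eq_self_iff_true, if_pos]
    linarith
  | succ i' =>
    rw [if_neg (Nat.succ_ne_zero i'), sub_zero]
    have h0 : ∀ k, Jmat a (i'+1) k * g a (N-k)
        = if i' ≤ k then a (k - i') * g a (N-k) else 0 := by
      intro k
      simp only [Jmat]
      by_cases h : i' ≤ k
      · rw [if_pos (by omega : i' + 1 ≤ k + 1), if_pos h]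
        congr 2
        omega
      · rw [if_neg (by omega), if_neg h, zero_mul]
    simp only [h0]
    rw [← Finset.sum_filter]
    have hfil : (Finset.range (N+1)).filter (fun k => i' ≤ k) = Finset.Ico i' (N+1) := by
      apply Finset.ext
      intro x
      simp only [Finset.mem_filter, Finset.mem_range, Finset.mem_Ico]
      tauto
    rw [hfil, Finset.sum_Ico_eq_sum_range]
    have hn : N + 1 - i' = (N - i' - 1) + 2 := by omega
    have hterm : ∀ t, a (i' + t - i') * g a (N - (i' + t))
        = a t * g a ((N - i' - 1) + 1 - t) := by
      intro t
      congr 2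
      · omega
      · omega
    rw [hn]
    calc ∑ t ∈ Finset.range ((N-i'-1)+2), a (i' + t - i') * g a (N - (i' + t))
        = ∑ t ∈ Finset.range ((N-i'-1)+2), a t * g a ((N-i'-1)+1-t) := by
          apply Finset.sum_congr rfl
          intro t _
          exact hterm t
      _ = g a (N - i' - 1) := keyg hsum ha0 (N - i' - 1)
      _ = g a (N - (i'+1)) := by rw [Nat.sub_sub]

set_option maxHeartbeats 1000000 in
lemma detOneSub_eq (hsum : HasSum a 1) (ha0 : a 0 ≠ 0) (n : ℕ) :
    detOneSub (Jmat a) n = a 0 ^ n * g a n := by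
  cases n with
  | zero =>
    rw [detOneSub, Matrix.det_fin_zero, g_zero ha0]
    norm_num
  | succ N =>
    set B : Matrix (Fin (N+1)) (Fin (N+1)) ℝ :=
      1 - Matrix.of (fun i j : Fin (N+1) => Jmat a i.1 j.1) with hB
    set v : Fin (N+1) → ℝ := fun i => g a (N - i.1) with hv
    set c : ℝ := a 0 * g a (N+1) with hc
    have step1 : ∀ i : Fin (N+1), ∑ k, B i k * v k = if i = 0 then c else 0 := by
      intro i
      have h1 : ∑ k, B i k * v k
          = v i - ∑ k ∈ Finset.range (N+1), Jmat a i.1 k * g a (N-k) := by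
        rw [hB]
        simp only [Matrix.sub_apply, Matrix.one_apply, Matrix.of_apply, sub_mul]
        rw [Finset.sum_sub_distrib]
        congr 1
        · simp [ite_mul]
        · rw [← Fin.sum_univ_eq_sum_range (fun k => Jmat a i.1 k * g a (N-k)) (N+1)]
      rw [h1, Jrow hsum ha0 N i.1 (by omega : i.1 ≤ N)]
      have : v i = g a (N - i.1) := rfl
      rw [this]
      have hiff : i.1 = 0 ↔ i = 0 := by
        constructor
        · intro h; exact Fin.ext h
        · intro h; rw [h]; rfl
      by_cases hi0 : i = 0
      · rw [if_pos (hiff.mpr hi0), if_pos hi0]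
        ring
      · rw [if_neg (fun h => hi0 (hiff.mp h)), if_neg hi0]
        ring
    set T : Matrix (Fin (N+1)) (Fin (N+1)) ℝ :=
      Matrix.of (fun i j => if j = Fin.last N then v i else if i = j then 1 else 0) with hT
    have hTtri : T.BlockTriangular id := by
      intro i j hji
      simp only [id_eq] at hji
      rw [hT]
      simp only [Matrix.of_apply]
      rw [if_neg, if_neg]
      · exact fun h => absurd (h ▸ hji) (lt_irrefl _)
      · intro h
        rw [h] at hji
        exact absurd (Fin.le_last i) (not_le.mpr hji)
    have hTdet : T.det = 1 := by
      rw [Matrix.det_of_upperTriangular hTtri]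
      have : ∀ i : Fin (N+1), T i i = if i = Fin.last N then v i else 1 := by
        intro i
        rw [hT]
        simp only [Matrix.of_apply]
        by_cases h : i = Fin.last N
        · rw [if_pos h, if_pos h]
        · simp [h]
      rw [Finset.prod_congr rfl (fun i _ => this i)]
      rw [Finset.prod_ite_eq' Finset.univ (Fin.last N) v]
      simp only [Finset.mem_univ, if_pos]
      rw [hv]
      simp only [Fin.val_last, Nat.sub_self]
      exact g_zero ha0
    set D : Matrix (Fin (N+1)) (Fin (N+1)) ℝ :=
      Matrix.of (fun i j => if j = Fin.last N then (if i = 0 then c else 0) else B i j) with hD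
    have hBT : B * T = D := by
      ext i j
      rw [Matrix.mul_apply, hD]
      simp only [Matrix.of_apply]
      by_cases hj : j = Fin.last N
      · rw [if_pos hj]
        have : ∀ k, T k j = v k := by
          intro k; rw [hT]; simp only [Matrix.of_apply]; rw [if_pos hj]
        rw [Finset.sum_congr rfl (fun k _ => by rw [this k])]
        exact step1 i
      · rw [if_neg hj]
        have : ∀ k, T k j = if k = j then 1 else 0 := by
          intro k; rw [hT]; simp only [Matrix.of_apply]; rw [if_neg hj]
        rw [Finset.sum_congr rfl (fun k _ => by rw [this k])]
        simp [Finset.sum_ite_eq']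
    set σ : Equiv.Perm (Fin (N+1)) := (finRotate (N+1))⁻¹ with hσ
    have hσ0 : σ 0 = Fin.last N := by
      rw [hσ]
      rw [Equiv.Perm.inv_def]
      rw [Equiv.symm_apply_eq]
      exact (finRotate_last).symm
    have hσs : ∀ k : Fin N, σ k.succ = k.castSucc := by
      intro k
      rw [hσ, Equiv.Perm.inv_def, Equiv.symm_apply_eq]
      rw [finRotate_succ_apply]
      exact Fin.coeSucc_eq_succ.symm
    set E : Matrix (Fin (N+1)) (Fin (N+1)) ℝ := D.submatrix id σ with hE
    have hEtri : E.BlockTriangular id := by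
      intro i j hji
      simp only [id_eq] at hji
      rw [hE]
      simp only [Matrix.submatrix_apply, id_eq]
      rcases Fin.eq_zero_or_eq_succ j with hj0 | ⟨k, hjk⟩
      · subst hj0
        rw [hσ0, hD]
        have hi0 : i ≠ 0 := fun h => by rw [h] at hji; exact absurd hji (lt_irrefl _)
        simp [hi0]
      · subst hjk
        rw [hσs k, hD]
        simp only [Matrix.of_apply]
        rw [if_neg (ne_of_lt (Fin.castSucc_lt_last k)), hB]
        simp only [Matrix.sub_apply, Matrix.one_apply, Matrix.of_apply]
        have hval : (k:ℕ) + 1 < (i:ℕ) := hji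
        rw [if_neg, Jmat, if_neg]
        · ring
        · simp only [Fin.coe_castSucc]
          omega
        · intro h
          have : (i:ℕ) = (k:ℕ) := by rw [h]; rfl
          omega
    have hEdet : E.det = c * (-(a 0))^N := by
      rw [Matrix.det_of_upperTriangular hEtri]
      rw [Fin.prod_univ_succ]
      have h00 : E 0 0 = c := by
        rw [hE]
        simp only [Matrix.submatrix_apply, id_eq]
        rw [hσ0, hD]
        simp
      have hss : ∀ k : Fin N, E k.succ k.succ = -(a 0) := by
        intro k
        rw [hE]
        simp only [Matrix.submatrix_apply, id_eq]
        rw [hσs k, hD]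
        have h1 : (k.castSucc : Fin (N+1)) ≠ Fin.last N := ne_of_lt (Fin.castSucc_lt_last k)
        have h2 : (k.succ : Fin (N+1)) ≠ k.castSucc := by
          intro h
          have := congrArg Fin.val h
          simp at this
        rw [hB]
        simp [h1, h2, Matrix.one_apply, Jmat]
      rw [h00, Finset.prod_congr rfl (fun k _ => hss k)]
      rw [Finset.prod_const]
      simp [Finset.card_univ]
    have hsign : (Equiv.Perm.sign σ : ℝ) = (-1)^N := by
      rw [hσ]
      rw [Equiv.Perm.sign_inv]
      rw [sign_finRotate]
      push_cast
      norm_num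
    have hperm := Matrix.det_permute' σ D
    rw [← hE] at hperm
    have hneg : ((-1:ℝ)^N) * ((-1:ℝ)^N) = 1 := by
      rw [← pow_add, ← two_mul, pow_mul]
      norm_num
    have hDdet : D.det = (-1:ℝ)^N * E.det := by
      rw [hperm, hsign, ← mul_assoc, hneg, one_mul]
    have hBdet : B.det = c * a 0 ^ N := by
      have h1 : B.det * T.det = D.det := by rw [← Matrix.det_mul, hBT]
      rw [hTdet, mul_one] at h1
      rw [h1, hDdet, hEdet]
      have hx : (-1:ℝ)^N * (c * (-a 0)^N) = ((-1) * (-a 0):ℝ)^N * c := by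
        rw [mul_pow]; ring
      rw [hx, neg_mul_neg, one_mul]
      ring
    have : detOneSub (Jmat a) (N+1) = B.det := rfl
    rw [this, hBdet, hc]
    ring

open Filter in
lemma ratio_eq (hsum : HasSum a 1) (ha0 : a 0 ≠ 0) (N : ℕ) :
    a 0 * detOneSub (Jmat a) N / detOneSub (Jmat a) (N+1) = S a N / S a (N+1) := by
  rw [detOneSub_eq hsum ha0 N, detOneSub_eq hsum ha0 (N+1)]
  have h1 : a 0 * (a 0 ^ N * g a N) = a 0 ^ (N+2) * S a N := by rw [g]; ring
  have h2 : a 0 ^ (N+1) * g a (N+1) = a 0 ^ (N+2) * S a (N+1) := by rw [g]; ring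
  rw [h1, h2, mul_div_mul_left _ _ (pow_ne_zero _ ha0)]

lemma r_eq_tail (hsum : HasSum a 1) (j : ℕ) :
    r a j = ∑' i : ℕ, a (i + (j+1)) := by
  have hs : Summable a := hsum.summable
  have := Summable.sum_add_tsum_nat_add (f := a) (j+1) hs
  rw [hsum.tsum_eq] at this
  rw [r]
  linarith

set_option maxHeartbeats 1000000 in
lemma m_eq (hnn : ∀ k, 0 ≤ a k) (hsum : HasSum a 1) :
    ∑' k : ℕ, (k : ℝ≥0∞) * ENNReal.ofReal (a k) = ∑' j : ℕ, ENNReal.ofReal (r a j) := by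
  have h1 : ∀ k : ℕ, (k : ℝ≥0∞) * ENNReal.ofReal (a k)
      = ∑' j : ℕ, (if j < k then ENNReal.ofReal (a k) else 0) := by
    intro k
    rw [tsum_eq_sum (s := Finset.range k) (fun j hj => by
      rw [if_neg]; simpa using hj)]
    rw [Finset.sum_congr rfl (fun j hj => if_pos (Finset.mem_range.mp hj))]
    rw [Finset.sum_const, Finset.card_range]
    simp [nsmul_eq_mul]
  rw [tsum_congr h1, ENNReal.tsum_comm]
  apply tsum_congr
  intro j
  have h2 : ∀ i : ℕ, (if i + (j+1) > j then ENNReal.ofReal (a (i + (j+1))) else 0)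
      = ENNReal.ofReal (a (i + (j+1))) := by
    intro i
    rw [if_pos (by omega)]
  calc ∑' k : ℕ, (if j < k then ENNReal.ofReal (a k) else 0)
      = (∑ k ∈ Finset.range (j+1), (if j < k then ENNReal.ofReal (a k) else 0))
        + ∑' i : ℕ, (if j < i + (j+1) then ENNReal.ofReal (a (i + (j+1))) else 0) := by
        exact (Summable.sum_add_tsum_nat_add' (k := j+1) ENNReal.summable).symm
    _ = ∑' i : ℕ, ENNReal.ofReal (a (i + (j+1))) := by
        rw [Finset.sum_eq_zero (fun k hk => by
          rw [if_neg]; have := Finset.mem_range.mp hk; omega), zero_add]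
        exact tsum_congr (fun i => by rw [if_pos (by omega)])
    _ = ENNReal.ofReal (∑' i : ℕ, a (i + (j+1))) := by
        rw [ENNReal.ofReal_tsum_of_nonneg (fun i => hnn _)]
        exact (hsum.summable.comp_injective (add_left_injective (j+1)))
    _ = ENNReal.ofReal (r a j) := by rw [r_eq_tail hsum]

lemma sum_r_le_one (hnn : ∀ k, 0 ≤ a k) (hsum : HasSum a 1)
    (hm1 : ∑' j : ℕ, ENNReal.ofReal (r a j) ≤ 1) (n : ℕ) :
    ∑ j ∈ Finset.range n, r a j ≤ 1 := by
  have h1 : ENNReal.ofReal (∑ j ∈ Finset.range n, r a j)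
      = ∑ j ∈ Finset.range n, ENNReal.ofReal (r a j) :=
    ENNReal.ofReal_sum_of_nonneg (fun j _ => r_nonneg hnn hsum j)
  have h2 : (∑ j ∈ Finset.range n, ENNReal.ofReal (r a j)) ≤ 1 :=
    le_trans (ENNReal.sum_le_tsum _) hm1
  rw [← h1] at h2
  exact ENNReal.ofReal_le_one.mp h2

lemma u_le (hnn : ∀ k, 0 ≤ a k) (hsum : HasSum a 1) (ha0 : 0 < a 0)
    (hm1 : ∑' j : ℕ, ENNReal.ofReal (r a j) ≤ 1) (n : ℕ) :
    u a n ≤ (a 0)⁻¹ := by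
  induction n using Nat.strong_induction_on with
  | _ n ih =>
    rcases Nat.eq_zero_or_pos n with rfl | hn
    · rw [u_zero ha0.ne']
    · have h := E2 ha0.ne' n
      rw [if_neg hn.ne'] at h
      have hb : ∑ i ∈ Finset.range n, r a (i+1) * u a (n - 1 - i)
          ≤ ∑ i ∈ Finset.range n, r a (i+1) * (a 0)⁻¹ := by
        apply Finset.sum_le_sum
        intro i hi
        have hi' := Finset.mem_range.mp hi
        exact mul_le_mul_of_nonneg_left (ih _ (by omega)) (r_nonneg hnn hsum _)
      have hc : ∑ i ∈ Finset.range n, r a (i+1) ≤ a 0 := by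
        have h4 := sum_r_le_one hnn hsum hm1 (n+1)
        rw [Finset.sum_range_succ'] at h4
        rw [r_zero] at h4
        linarith
      rw [← Finset.sum_mul] at hb
      have hbc : ∑ i ∈ Finset.range n, r a (i+1) * u a (n - 1 - i) ≤ a 0 * (a 0)⁻¹ :=
        le_trans hb (mul_le_mul_of_nonneg_right hc (by positivity))
      rw [zero_add] at h
      nlinarith [h, hbc, ha0]

open Filter in
lemma tendsto_of_mean_le (hnn : ∀ k, 0 ≤ a k) (hsum : HasSum a 1) (ha0 : 0 < a 0)
    (hm1 : ∑' j : ℕ, ENNReal.ofReal (r a j) ≤ 1) :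
    Tendsto (fun N : ℕ => S a N / S a (N+1)) atTop (nhds 1) := by
  have hmono := S_mono hnn hsum ha0
  by_cases hbdd : BddAbove (Set.range (S a))
  · have hL : Tendsto (S a) atTop (nhds (⨆ n, S a n)) := tendsto_atTop_ciSup hmono hbdd
    have hLpos : 0 < ⨆ n, S a n :=
      lt_of_lt_of_le (S_pos hnn hsum ha0 0) (le_ciSup hbdd 0)
    have h2 : Tendsto (fun N : ℕ => S a (N+1)) atTop (nhds (⨆ n, S a n)) :=
      hL.comp (tendsto_add_atTop_nat 1)
    have h3 := Tendsto.div hL h2 hLpos.ne'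
    rw [div_self hLpos.ne'] at h3
    exact h3
  · have hub : ∀ b : ℝ, ∃ n, b ≤ S a n := by
      intro b
      rcases not_bddAbove_iff.mp hbdd b with ⟨y, ⟨n, rfl⟩, hy⟩
      exact ⟨n, le_of_lt hy⟩
    have htop : Tendsto (S a) atTop atTop := tendsto_atTop_atTop_of_monotone hmono hub
    have h2 : Tendsto (fun N : ℕ => S a (N+1)) atTop atTop :=
      htop.comp (tendsto_add_atTop_nat 1)
    have hq : Tendsto (fun N : ℕ => u a (N+1) / S a (N+1)) atTop (nhds 0) := by
      have hup : Tendsto (fun N : ℕ => (a 0)⁻¹ / S a (N+1)) atTop (nhds 0) :=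
        Tendsto.div_atTop tendsto_const_nhds h2
      apply squeeze_zero (fun N => div_nonneg (u_nonneg hnn hsum ha0 _)
        (le_of_lt (S_pos hnn hsum ha0 _))) _ hup
      intro N
      exact (div_le_div_iff_of_pos_right (S_pos hnn hsum ha0 (N+1))).mpr
        (u_le hnn hsum ha0 hm1 (N+1))
    have heq : ∀ N : ℕ, S a N / S a (N+1) = 1 - u a (N+1) / S a (N+1) := by
      intro N
      have hS := (S_pos hnn hsum ha0 (N+1)).ne'
      rw [eq_sub_iff_add_eq, ← add_div, ← S_succ, div_self hS]
    simp only [heq]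
    have h5 := (tendsto_const_nhds (x := (1:ℝ)) (f := atTop)).sub hq
    simpa using h5

lemma icc_eq (f : ℕ → ℝ) (n : ℕ) :
    ∑ j ∈ Finset.Icc 1 n, f j = ∑ i ∈ Finset.range n, f (1+i) := by
  rw [← Finset.Ico_add_one_right_eq_Icc, Finset.sum_Ico_eq_sum_range]
  simp

lemma exists_partial_gt (hnn : ∀ k, 0 ≤ a k) (hsum : HasSum a 1) (ha0 : 0 < a 0)
    (hgt : 1 < ∑' j : ℕ, ENNReal.ofReal (r a j)) :
    ∃ K : ℕ, 0 < K ∧ a 0 < ∑ i ∈ Finset.range K, r a (i+1) := by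
  rw [ENNReal.tsum_eq_iSup_sum] at hgt
  rcases lt_iSup_iff.mp hgt with ⟨s, hs⟩
  rcases Finset.exists_nat_subset_range s with ⟨n, hn⟩
  have h1 : (1:ℝ≥0∞) < ∑ j ∈ Finset.range n, ENNReal.ofReal (r a j) :=
    lt_of_lt_of_le hs (Finset.sum_le_sum_of_subset hn)
  rw [← ENNReal.ofReal_sum_of_nonneg (fun j _ => r_nonneg hnn hsum j)] at h1
  have h2 : (1:ℝ) < ∑ j ∈ Finset.range n, r a j := by
    by_contra hc
    push_neg at hc
    exact absurd (ENNReal.ofReal_le_one.mpr hc) (not_le.mpr h1)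
  rcases Nat.eq_zero_or_pos n with rfl | hn1
  · simp at h2; linarith
  · obtain ⟨K, rfl⟩ : ∃ K, n = K + 1 := ⟨n-1, by omega⟩
    rw [Finset.sum_range_succ', r_zero] at h2
    refine ⟨K, Nat.pos_of_ne_zero ?_, by linarith⟩
    rintro rfl
    simp at h2
    linarith

set_option maxHeartbeats 1000000 in
open Filter in
lemma mean_le_of_tendsto (hnn : ∀ k, 0 ≤ a k) (hsum : HasSum a 1) (ha0 : 0 < a 0)
    (h : Tendsto (fun N : ℕ => S a N / S a (N+1)) atTop (nhds 1)) :
    ∑' j : ℕ, ENNReal.ofReal (r a j) ≤ 1 := by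
  by_contra hgt
  push_neg at hgt
  obtain ⟨K, hK, hQ⟩ := exists_partial_gt hnn hsum ha0 hgt
  set Q := ∑ i ∈ Finset.range K, r a (i+1) with hQdef
  have hQpos : 0 < Q := lt_trans ha0 hQ
  have hdivlt : a 0 / Q < 1 := (div_lt_one hQpos).mpr hQ
  have hdivpos : 0 < a 0 / Q := div_pos ha0 hQpos
  set t : ℝ := (a 0 / Q + 1) / 2 with ht
  have ht0 : 0 < t := by rw [ht]; linarith
  have htlt : a 0 / Q < t := by rw [ht]; linarith
  have ht1 : t < 1 := by rw [ht]; linarith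
  set x : ℝ := t ^ ((1:ℝ)/K) with hx
  have hx0 : 0 < x := Real.rpow_pos_of_pos ht0 _
  have hx1 : x < 1 := by
    apply Real.rpow_lt_one ht0.le ht1
    positivity
  have hxK : x ^ K = t := by
    rw [hx, ← Real.rpow_natCast (t ^ ((1:ℝ)/K)) K, ← Real.rpow_mul ht0.le]
    rw [one_div, inv_mul_cancel₀ (by exact_mod_cast hK.ne' : (K:ℝ) ≠ 0), Real.rpow_one]
  set θ : ℝ := (∑ j ∈ Finset.Icc 1 K, r a j * x^j) / a 0 with hθ
  have hsumicc : ∑ j ∈ Finset.Icc 1 K, r a j * x^j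
      = ∑ i ∈ Finset.range K, r a (1+i) * x^(1+i) := icc_eq _ K
  have hθ1 : 1 < θ := by
    have hb : ∀ i ∈ Finset.range K, r a (1+i) * x^K ≤ r a (1+i) * x^(1+i) := by
      intro i hi
      apply mul_le_mul_of_nonneg_left _ (r_nonneg hnn hsum _)
      exact pow_le_pow_of_le_one hx0.le hx1.le (by have := Finset.mem_range.mp hi; omega)
    have hsumb : Q * x^K ≤ ∑ i ∈ Finset.range K, r a (1+i) * x^(1+i) := by
      rw [hQdef, Finset.sum_mul]
      apply Finset.sum_le_sum
      intro i hi
      rw [show i + 1 = 1 + i from by omega]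
      exact hb i hi
    rw [hθ, lt_div_iff₀ ha0, one_mul, hsumicc]
    have h3 : a 0 < t * Q := (div_lt_iff₀ hQpos).mp htlt
    rw [hxK] at hsumb
    linarith
  have hθ0 : 0 < θ := lt_trans one_pos hθ1
  set w : ℕ → ℝ := fun n => u a n * x^n with hw
  have hw0 : ∀ n, 0 ≤ w n := fun n =>
    mul_nonneg (u_nonneg hnn hsum ha0 n) (by positivity)
  set W : ℕ → ℝ := fun N => ∑ n ∈ Finset.range (N+1), w n with hW
  have hWmono : Monotone W := by
    apply monotone_nat_of_le_succ
    intro n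
    apply Finset.sum_le_sum_of_subset_of_nonneg
    · exact Finset.range_subset_range.mpr (by omega)
    · exact fun i _ _ => hw0 i
  have hW0pos : 0 < W 0 := by
    have : W 0 = u a 0 * x^0 := by rw [hW]; simp [hw]
    rw [this, u_zero ha0.ne']
    positivity
  have hWpos : ∀ N, 0 < W N := fun N => lt_of_lt_of_le hW0pos (hWmono (Nat.zero_le N))
  -- recurrence in Icc form
  have hwrec : ∀ n : ℕ, 1 ≤ n →
      a 0 * w n = ∑ j ∈ Finset.Icc 1 n, (r a j * x^j) * w (n - j) := by
    intro n hn
    have h2 := E2 ha0.ne' n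
    rw [if_neg (by omega), zero_add] at h2
    have h3 : a 0 * w n = (∑ i ∈ Finset.range n, r a (i+1) * u a (n-1-i)) * x^n := by
      rw [hw]; simp only; rw [← h2]; ring
    rw [h3, Finset.sum_mul, icc_eq (fun j => (r a j * x^j) * w (n - j)) n]
    apply Finset.sum_congr rfl
    intro i hi
    have hi' := Finset.mem_range.mp hi
    have e1 : n - (1+i) = n - 1 - i := by omega
    have e2 : x^(1+i) * x^(n-1-i) = x^n := by
      rw [← pow_add]; congr 1; omega
    rw [e1, show (1:ℕ)+i = i+1 from by omega] at *
    rw [hw]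
    simp only
    rw [← e2]
    ring
  -- step inequality
  have hstep : ∀ N : ℕ, θ * W N ≤ W (N + K) := by
    intro N
    set M := N + K with hM
    have hKM : K ≤ M := by omega
    have h1 : a 0 * (θ * W N) = ∑ j ∈ Finset.Icc 1 K, (r a j * x^j) * W N := by
      rw [hθ, ← Finset.sum_mul]
      field_simp
    have h2 : ∑ j ∈ Finset.Icc 1 K, (r a j * x^j) * W N
        ≤ ∑ j ∈ Finset.Icc 1 K, (r a j * x^j) * W (M - j) := by
      apply Finset.sum_le_sum
      intro j hj
      have hj' := Finset.mem_Icc.mp hj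
      apply mul_le_mul_of_nonneg_left _ (mul_nonneg (r_nonneg hnn hsum _) (by positivity))
      exact hWmono (by omega)
    have h3 : ∀ j ∈ Finset.Icc 1 M, (r a j * x^j) * W (M - j)
        = ∑ n ∈ Finset.Icc j M, (r a j * x^j) * w (n - j) := by
      intro j hj
      have hj' := Finset.mem_Icc.mp hj
      rw [hW]
      simp only
      rw [Finset.mul_sum, ← Finset.Ico_add_one_right_eq_Icc j M, Finset.sum_Ico_eq_sum_range]
      have : M + 1 - j = M - j + 1 := by omega
      rw [this]
      apply Finset.sum_congr rfl
      intro i _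
      congr 2
      omega
    have h4 : ∑ j ∈ Finset.Icc 1 K, (r a j * x^j) * W (M - j)
        ≤ ∑ j ∈ Finset.Icc 1 M, (r a j * x^j) * W (M - j) := by
      apply Finset.sum_le_sum_of_subset_of_nonneg
      · apply Finset.Icc_subset_Icc_right hKM
      · intro j _ _
        exact mul_nonneg (mul_nonneg (r_nonneg hnn hsum _) (by positivity))
          (le_of_lt (hWpos _))
    have h5 : ∑ j ∈ Finset.Icc 1 M, ∑ n ∈ Finset.Icc j M, (r a j * x^j) * w (n - j)
        = ∑ n ∈ Finset.Icc 1 M, ∑ j ∈ Finset.Icc 1 n, (r a j * x^j) * w (n - j) := by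
      have h := Finset.sum_Ico_Ico_comm 1 (M+1) (fun j n => (r a j * x^j) * w (n - j))
      simpa only [Finset.Ico_add_one_right_eq_Icc] using h
    have h6 : ∑ n ∈ Finset.Icc 1 M, ∑ j ∈ Finset.Icc 1 n, (r a j * x^j) * w (n - j)
        = ∑ n ∈ Finset.Icc 1 M, a 0 * w n := by
      apply Finset.sum_congr rfl
      intro n hn
      exact (hwrec n (Finset.mem_Icc.mp hn).1).symm
    have h7 : ∑ n ∈ Finset.Icc 1 M, a 0 * w n ≤ a 0 * W M := by
      rw [← Finset.mul_sum]
      apply mul_le_mul_of_nonneg_left _ ha0.le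
      apply Finset.sum_le_sum_of_subset_of_nonneg
      · intro n hn
        rw [Finset.mem_range]
        have := (Finset.mem_Icc.mp hn).2
        omega
      · exact fun i _ _ => hw0 i
    have hchain : a 0 * (θ * W N) ≤ a 0 * W M := by
      calc a 0 * (θ * W N) = ∑ j ∈ Finset.Icc 1 K, (r a j * x^j) * W N := h1
        _ ≤ ∑ j ∈ Finset.Icc 1 K, (r a j * x^j) * W (M - j) := h2
        _ ≤ ∑ j ∈ Finset.Icc 1 M, (r a j * x^j) * W (M - j) := h4
        _ = ∑ j ∈ Finset.Icc 1 M, ∑ n ∈ Finset.Icc j M, (r a j * x^j) * w (n - j) :=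
            Finset.sum_congr rfl h3
        _ = ∑ n ∈ Finset.Icc 1 M, ∑ j ∈ Finset.Icc 1 n, (r a j * x^j) * w (n - j) := h5
        _ = ∑ n ∈ Finset.Icc 1 M, a 0 * w n := h6
        _ ≤ a 0 * W M := h7
    exact le_of_mul_le_mul_left hchain ha0
  have hgrow : ∀ k : ℕ, θ^k * W 0 ≤ W (k*K) := by
    intro k
    induction k with
    | zero => simp
    | succ k ih =>
      have he : θ^(k+1) * W 0 = θ * (θ^k * W 0) := by ring
      rw [he]
      calc θ * (θ^k * W 0) ≤ θ * W (k*K) := mul_le_mul_of_nonneg_left ih hθ0.le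
        _ ≤ W (k*K + K) := hstep (k*K)
        _ = W ((k+1)*K) := by rw [Nat.succ_mul]
  set ρ : ℝ := (x+1)/2 with hρ
  have hxρ : x < ρ := by rw [hρ]; linarith
  have hρ1 : ρ < 1 := by rw [hρ]; linarith
  have hρ0 : 0 < ρ := by rw [hρ]; linarith
  clear_value ρ
  have hev : ∀ᶠ N in atTop, ρ < S a N / S a (N+1) := h.eventually (eventually_gt_nhds hρ1)
  obtain ⟨N₀, hN₀⟩ := eventually_atTop.mp hev
  have hSdec : ∀ k : ℕ, S a (N₀ + k) ≤ S a N₀ / ρ^k := by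
    intro k
    induction k with
    | zero => simp
    | succ k ih =>
      have h6 := hN₀ (N₀ + k) (by omega)
      have hS1 : 0 < S a (N₀ + k + 1) := S_pos hnn hsum ha0 _
      have h7 : ρ * S a (N₀+k+1) < S a (N₀+k) := by
        have := (lt_div_iff₀ hS1).mp h6
        linarith
      have h8 : S a (N₀+k+1) ≤ S a (N₀+k) / ρ := by
        rw [le_div_iff₀ hρ0]
        nlinarith [h7]
      calc S a (N₀+(k+1)) = S a (N₀+k+1) := by rw [← Nat.add_assoc]
        _ ≤ S a (N₀+k)/ρ := h8
        _ ≤ (S a N₀ / ρ^k)/ρ := (div_le_div_iff_of_pos_right hρ0).mpr ih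
        _ = S a N₀ / ρ^(k+1) := by rw [div_div, ← pow_succ]
  set C : ℝ := S a N₀ * x^N₀ with hC
  have hC0 : 0 ≤ C := mul_nonneg (S_pos hnn hsum ha0 _).le (by positivity)
  set q : ℝ := x / ρ with hq
  have hq0 : 0 < q := div_pos hx0 hρ0
  have hq1 : q < 1 := (div_lt_one hρ0).mpr hxρ
  have h1q : 0 < 1 - q := by linarith
  have hwb : ∀ k : ℕ, w (N₀ + k) ≤ C * q^k := by
    intro k
    have e2 : u a (N₀+k) * x^(N₀+k) ≤ S a (N₀+k) * x^(N₀+k) :=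
      mul_le_mul_of_nonneg_right (u_le_S hnn hsum ha0 _) (by positivity)
    have e3 : S a (N₀+k) * x^(N₀+k) ≤ (S a N₀/ρ^k) * x^(N₀+k) :=
      mul_le_mul_of_nonneg_right (hSdec k) (by positivity)
    have e4 : (S a N₀/ρ^k) * x^(N₀+k) = C * q^k := by
      rw [hC, hq, div_pow, pow_add]
      ring
    calc w (N₀+k) ≤ S a (N₀+k) * x^(N₀+k) := e2
      _ ≤ (S a N₀/ρ^k) * x^(N₀+k) := e3
      _ = C * q^k := e4
  have hgeo : ∀ d : ℕ, ∑ i ∈ Finset.range d, q^i ≤ 1/(1-q) := by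
    intro d
    have h9 : ∑ i ∈ Finset.range d, q^i = (1 - q^d)/(1-q) := by
      rw [geom_sum_eq (ne_of_lt hq1)]
      rw [← neg_div_neg_eq]
      ring_nf
    rw [h9]
    apply (div_le_div_iff_of_pos_right h1q).mpr
    have : (0:ℝ) ≤ q^d := by positivity
    linarith
  have hWb : ∀ M : ℕ, W M ≤ W N₀ + C * (1/(1-q)) := by
    intro M
    rcases le_or_gt M N₀ with hM | hM
    · have hh1 : W M ≤ W N₀ := hWmono hM
      have hh2 : 0 ≤ C * (1/(1-q)) := mul_nonneg hC0 (by positivity)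
      linarith
    · have hsplit : W M = W N₀ + ∑ n ∈ Finset.Ico (N₀+1) (M+1), w n := by
        simp only [hW]
        rw [Finset.range_eq_Ico, Finset.range_eq_Ico]
        exact (Finset.sum_Ico_consecutive w (by omega : 0 ≤ N₀+1) (by omega : N₀+1 ≤ M+1)).symm
      have hb2 : ∑ n ∈ Finset.Ico (N₀+1) (M+1), w n ≤ C * (1/(1-q)) := by
        rw [Finset.sum_Ico_eq_sum_range]
        have hterm : ∀ i ∈ Finset.range (M+1-(N₀+1)), w (N₀+1+i) ≤ C * q^i := by
          intro i _
          have e5 : N₀+1+i = N₀+(1+i) := by omega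
          rw [e5]
          calc w (N₀+(1+i)) ≤ C * q^(1+i) := hwb (1+i)
            _ ≤ C * q^i := by
                apply mul_le_mul_of_nonneg_left _ hC0
                exact pow_le_pow_of_le_one hq0.le hq1.le (by omega)
        calc ∑ i ∈ Finset.range (M+1-(N₀+1)), w (N₀+1+i)
            ≤ ∑ i ∈ Finset.range (M+1-(N₀+1)), C * q^i := Finset.sum_le_sum hterm
          _ = C * ∑ i ∈ Finset.range (M+1-(N₀+1)), q^i := by rw [Finset.mul_sum]
          _ ≤ C * (1/(1-q)) := mul_le_mul_of_nonneg_left (hgeo _) hC0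
      rw [hsplit]
      linarith
  obtain ⟨k, hk⟩ := pow_unbounded_of_one_lt ((W N₀ + C * (1/(1-q))) / W 0) hθ1
  have h10 : W N₀ + C * (1/(1-q)) < θ^k * W 0 := by
    have := (div_lt_iff₀ hW0pos).mp hk
    linarith
  have h11 := hgrow k
  have h12 := hWb (k*K)
  linarith

end RS

/-- Recurrence criterion for the repair-shop chain: with
`α_N = det(Id − J_{[0,N]})` (and `α_{−1} = 1`), one has
`a_0 · α_{N−1} / α_N → 1` as `N → ∞` iff the mean `m = ∑_k k·a_k` (in the extended
reals) is `≤ 1`. -/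
theorem repairShop_recurrence_criterion (a : ℕ → ℝ)
    (hnn : ∀ k, 0 ≤ a k) (hsum : HasSum a 1) (ha0 : 0 < a 0)
    (m : ℝ≥0∞) (hm : m = ∑' k : ℕ, (k : ℝ≥0∞) * ENNReal.ofReal (a k)) :
    Filter.Tendsto
        (fun N : ℕ => a 0 * detOneSub (Jmat a) N / detOneSub (Jmat a) (N + 1))
        Filter.atTop (nhds 1) ↔ m ≤ 1 := by
  have hfun : (fun N : ℕ => a 0 * detOneSub (Jmat a) N / detOneSub (Jmat a) (N + 1))
      = fun N : ℕ => RS.S a N / RS.S a (N+1) :=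
    funext (fun N => RS.ratio_eq hsum ha0.ne' N)
  rw [hfun, hm, RS.m_eq hnn hsum]
  exact ⟨RS.mean_le_of_tendsto hnn hsum ha0, RS.tendsto_of_mean_le hnn hsum ha0⟩
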